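/- Let M_{a,b} be an ACM with a < b, q = gcd(a,b), writing a = qa', b = qb'. If n is an atom of M_{a,b} with q² ∣ n, then the number of prime factors of n (with multiplicity) lying in the class a' mod b' and not dividing q exceeds the number of such prime factors of q² by at most one. -/

import Mathlib

/-- Membership in the arithmetic congruence monoid `M_{a,b}`. -/
def memACM (a b n : ℕ) : Prop := (1 ≤ n ∧ n ≡ a [MOD b]) ∨ n = 1

/-- The number of prime factors of `n`, with multiplicity, congruent to `a'` mod `b'`
and not dividing `q`. -/
def countClassFactors (a' b' q n : ℕ) : ℕ :=
  (n.primeFactorsList.filter (fun p => decide (p ≡ a' [MOD b'] ∧ ¬ p ∣ q))).length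

private lemma cancel_mul_modEq {q x y n : ℕ} (hq : q ≠ 0)
    (h : q * x ≡ q * y [MOD q * n]) : x ≡ y [MOD n] := by
  unfold Nat.ModEq at *
  rw [Nat.mul_mod_mul_left, Nat.mul_mod_mul_left] at h
  exact Nat.eq_of_mul_eq_mul_left (Nat.pos_of_ne_zero hq) h

private lemma sublist_prod_dvd {l₁ l₂ : List ℕ} (h : l₁.Sublist l₂) :
    l₁.prod ∣ l₂.prod := by
  induction h with
  | slnil => simp
  | cons a h ih => rw [List.prod_cons]; exact dvd_mul_of_dvd_right ih a
  | cons_cons a h ih => rw [List.prod_cons, List.prod_cons]; exact mul_dvd_mul_left a ih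

private lemma count_mul (a' b' q m k : ℕ) (hm : m ≠ 0) (hk : k ≠ 0) :
    countClassFactors a' b' q (m * k)
      = countClassFactors a' b' q m + countClassFactors a' b' q k := by
  unfold countClassFactors
  rw [← List.length_append, ← List.filter_append]
  exact ((Nat.perm_primeFactorsList_mul hm hk).filter _).length_eq

theorem acm_atom_factor_count (a b : ℕ) (ha : 1 ≤ a) (hab : a < b)
    (hidem : a ^ 2 ≡ a [MOD b]) (q a' b' : ℕ) (hq : q = Nat.gcd a b)
    (ha' : a = q * a') (hb' : b = q * b')
    (n : ℕ) (hnM : memACM a b n) (hn1 : 1 < n) (hq2 : q ^ 2 ∣ n)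
    (hatom : ¬ ∃ m m' : ℕ, memACM a b m ∧ memACM a b m' ∧ 1 < m ∧ 1 < m' ∧ n = m * m') :
    countClassFactors a' b' q n ≤ countClassFactors a' b' q (q ^ 2) + 1 := by
  have hq0 : q ≠ 0 := by
    subst hq
    exact Nat.ne_of_gt (Nat.gcd_pos_of_pos_left b ha)
  have hq1 : 1 ≤ q := Nat.one_le_iff_ne_zero.mpr hq0
  obtain ⟨w, hw⟩ := hq2
  have hn0 : n ≠ 0 := by omega
  have hw0 : w ≠ 0 := by rintro rfl; simp at hw; omega
  -- coprimality of a' and b'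
  have hg : Nat.gcd a' b' = 1 := by
    have h1 : q * 1 = q * Nat.gcd a' b' := by
      rw [mul_one, ← Nat.gcd_mul_left, ← ha', ← hb', ← hq]
    exact (Nat.eq_of_mul_eq_mul_left (Nat.pos_of_ne_zero hq0) h1).symm
  -- q * a' ≡ 1 [MOD b']
  have h1 : q * a' ≡ 1 [MOD b'] := by
    have h2 : a' * a ≡ a' * 1 [MOD b'] := by
      apply cancel_mul_modEq hq0
      have e1 : q * (a' * a) = a ^ 2 := by rw [ha']; ring
      have e2 : q * (a' * 1) = a := by rw [ha']; ring
      rw [e1, e2, ← hb']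
      exact hidem
    have h3 : a ≡ 1 [MOD b'] :=
      Nat.ModEq.cancel_left_of_coprime (by rw [Nat.gcd_comm]; exact hg) h2
    rw [ha'] at h3
    exact h3
  -- n ≡ a mod b
  have hnmod : n ≡ a [MOD b] := by
    rcases hnM with ⟨_, h⟩ | h
    · exact h
    · omega
  -- q * w ≡ a' [MOD b']
  have hqw : q * w ≡ a' [MOD b'] := by
    apply cancel_mul_modEq hq0
    have e1 : q * (q * w) = n := by rw [hw]; ring
    rw [e1, ← ha', ← hb']
    exact hnmod
  have hcn : countClassFactors a' b' q n
      = countClassFactors a' b' q (q ^ 2) + countClassFactors a' b' q w := by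
    rw [hw]; exact count_mul a' b' q (q ^ 2) w (pow_ne_zero 2 hq0) hw0
  rw [hcn]
  have key : countClassFactors a' b' q w ≤ 1 := by
    by_contra hcw
    push_neg at hcw
    unfold countClassFactors at hcw
    obtain ⟨p₁, p₂, rest, hleq⟩ : ∃ p₁ p₂ rest,
        w.primeFactorsList.filter (fun p => decide (p ≡ a' [MOD b'] ∧ ¬ p ∣ q))
          = p₁ :: p₂ :: rest := by
      rcases hE : w.primeFactorsList.filter
          (fun p => decide (p ≡ a' [MOD b'] ∧ ¬ p ∣ q)) with _ | ⟨x, _ | ⟨y, r⟩⟩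
      · rw [hE] at hcw; simp at hcw
      · rw [hE] at hcw; simp at hcw
      · exact ⟨x, y, r, rfl⟩
    have hp₁mem : p₁ ∈ w.primeFactorsList.filter
        (fun p => decide (p ≡ a' [MOD b'] ∧ ¬ p ∣ q)) := by rw [hleq]; simp
    have hp₂mem : p₂ ∈ w.primeFactorsList.filter
        (fun p => decide (p ≡ a' [MOD b'] ∧ ¬ p ∣ q)) := by rw [hleq]; simp
    have hp₁f := List.mem_filter.mp hp₁mem
    have hp₂f := List.mem_filter.mp hp₂mem
    have hp₁prime : p₁.Prime := Nat.prime_of_mem_primeFactorsList hp₁f.1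
    have hp₂prime : p₂.Prime := Nat.prime_of_mem_primeFactorsList hp₂f.1
    have hp₁mod : p₁ ≡ a' [MOD b'] := (of_decide_eq_true hp₁f.2).1
    have hdvd : p₁ * p₂ ∣ w := by
      have hsub : [p₁, p₂].Sublist (w.primeFactorsList.filter
          (fun p => decide (p ≡ a' [MOD b'] ∧ ¬ p ∣ q))) := by
        rw [hleq]
        exact List.Sublist.cons₂ p₁ (List.Sublist.cons₂ p₂ (List.nil_sublist rest))
      have := sublist_prod_dvd (hsub.trans List.filter_sublist)
      rw [Nat.prod_primeFactorsList hw0] at this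
      simpa using this
    obtain ⟨v, hv⟩ : p₁ ∣ w := (dvd_mul_right p₁ p₂).trans hdvd
    have hp₂v : p₂ ∣ v := by
      rw [hv] at hdvd
      exact (mul_dvd_mul_iff_left (a := p₁) hp₁prime.ne_zero).mp hdvd
    have hv0 : v ≠ 0 := by rintro rfl; simp at hv; exact hw0 hv
    have hv2 : 2 ≤ v :=
      le_trans hp₂prime.two_le (Nat.le_of_dvd (Nat.pos_of_ne_zero hv0) hp₂v)
    -- v ≡ a' [MOD b']
    have hvmod : v ≡ a' [MOD b'] := by
      calc v = v * 1 := (mul_one v).symm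
        _ ≡ v * (q * a') [MOD b'] := Nat.ModEq.mul_left v h1.symm
        _ ≡ v * (q * p₁) [MOD b'] :=
            Nat.ModEq.mul_left v (Nat.ModEq.mul_left q hp₁mod.symm)
        _ = q * w := by rw [hv]; ring
        _ ≡ a' [MOD b'] := hqw
    apply hatom
    have hm1 : 1 * 2 ≤ q * p₁ := Nat.mul_le_mul hq1 hp₁prime.two_le
    have hm2 : 1 * 2 ≤ q * v := Nat.mul_le_mul hq1 hv2
    refine ⟨q * p₁, q * v, ?_, ?_, by omega, by omega, by rw [hw, hv]; ring⟩
    · exact Or.inl ⟨by omega, by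
        rw [ha', hb']; exact Nat.ModEq.mul_left' q hp₁mod⟩
    · exact Or.inl ⟨by omega, by
        rw [ha', hb']; exact Nat.ModEq.mul_left' q hvmod⟩
  omega
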